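/- For fixed p, q, r ∈ ℕ and a field K, the matrix product of two recurrence matrices is a recurrence matrix: if A ∈ K^{M_{p×r}} and B ∈ K^{M_{r×q}} both have finite-dimensional recursive closures, then so does A·B ∈ K^{M_{p×q}}, and dim(closure(A·B)) ≤ dim(closure(A)) · dim(closure(B)). -/

import Mathlib

/-- The free monoid `M_{p×q}` of pairs of equal-length words. -/
def EqPair (p q : ℕ) : Type :=
  {x : List (Fin p) × List (Fin q) // x.1.length = x.2.length}

/-- The single-letter shift operator `ρ(s,t)`: `(ρ(s,t)A)[U,W] = A[Us,Wt]`. -/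
def shiftL (p q : ℕ) (K : Type*) [Field K] (s : Fin p) (t : Fin q) :
    (EqPair p q → K) →ₗ[K] (EqPair p q → K) where
  toFun A := fun x => A ⟨(x.1.1 ++ [s], x.1.2 ++ [t]), by simp [x.2]⟩
  map_add' _ _ := rfl
  map_smul' _ _ := rfl

/-- A subspace of `K^{M_{p×q}}` is recursively closed if it is stable under
all shift operators. -/
def RecClosed (p q : ℕ) (K : Type*) [Field K]
    (V : Submodule K (EqPair p q → K)) : Prop :=
  ∀ (s : Fin p) (t : Fin q), ∀ A ∈ V, shiftL p q K s t A ∈ V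

/-- The recursive closure of `A`: the smallest recursively closed subspace
containing `A`. -/
def recClosure (p q : ℕ) (K : Type*) [Field K] (A : EqPair p q → K) :
    Submodule K (EqPair p q → K) :=
  sInf {V | A ∈ V ∧ RecClosed p q K V}

/-- `A` is a recurrence matrix if its recursive closure is
finite-dimensional. -/
def IsRecMatrix (p q : ℕ) (K : Type*) [Field K] (A : EqPair p q → K) : Prop :=
  FiniteDimensional K (recClosure p q K A)

/-- The matrix product `(A·B)[U,W] = ∑_V A[U,V] B[V,W]`. -/
def matMul {p r q : ℕ} {K : Type*} [Field K]
    (A : EqPair p r → K) (B : EqPair r q → K) : EqPair p q → K :=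
  fun x => ∑ V : Fin x.1.1.length → Fin r,
    A ⟨(x.1.1, List.ofFn V), by simp⟩ * B ⟨(List.ofFn V, x.1.2), by simp [x.2]⟩

section MatMulProof

variable {p r q : ℕ} {K : Type*} [Field K]

lemma mem_recClosure_self (A : EqPair p q → K) : A ∈ recClosure p q K A :=
  Submodule.mem_sInf.mpr fun _ hV => hV.1

lemma recClosed_recClosure (A : EqPair p q → K) : RecClosed p q K (recClosure p q K A) :=
  fun s t X hX => Submodule.mem_sInf.mpr fun V hV => hV.2 s t X (Submodule.mem_sInf.mp hX V hV)

lemma recClosure_le {A : EqPair p q → K} {V : Submodule K (EqPair p q → K)}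
    (h1 : A ∈ V) (h2 : RecClosed p q K V) : recClosure p q K A ≤ V :=
  sInf_le ⟨h1, h2⟩

/-- `matMul` as a bilinear map. -/
def matMulL (p r q : ℕ) (K : Type*) [Field K] :
    (EqPair p r → K) →ₗ[K] (EqPair r q → K) →ₗ[K] (EqPair p q → K) where
  toFun A :=
    { toFun := matMul A
      map_add' := fun B B' => funext fun x => by
        simp [matMul, mul_add, Finset.sum_add_distrib]
        rw [← Finset.sum_add_distrib]
        exact Finset.sum_congr rfl fun V _ => mul_add _ _ _
      map_smul' := fun c B => funext fun x => by
        simp [matMul, Finset.mul_sum, mul_left_comm]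
        exact Finset.sum_congr rfl fun V _ => mul_left_comm _ _ _ }
  map_add' A A' := LinearMap.ext fun B => funext fun x => by
    simp [matMul, add_mul, Finset.sum_add_distrib]
    rw [← Finset.sum_add_distrib]
    exact Finset.sum_congr rfl fun V _ => add_mul _ _ _
  map_smul' c A := LinearMap.ext fun B => funext fun x => by
    simp [matMul, Finset.mul_sum, mul_assoc]
    exact Finset.sum_congr rfl fun V _ => mul_assoc _ _ _

lemma shiftL_matMul (s : Fin p) (t : Fin q) (A : EqPair p r → K) (B : EqPair r q → K) :
    shiftL p q K s t (matMul A B) =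
      ∑ v : Fin r, matMul (shiftL p r K s v A) (shiftL r q K v t B) := by
  funext x
  obtain ⟨⟨U, W⟩, h⟩ := x
  have hm : (U ++ [s]).length = U.length + 1 := by simp
  erw [Finset.sum_apply]
  show (∑ V : Fin (U ++ [s]).length → Fin r,
      A ⟨(U ++ [s], List.ofFn V), by simp⟩ * B ⟨(List.ofFn V, W ++ [t]), by simp [h]⟩) = _
  have key : ∀ v : Fin r,
      matMul (shiftL p r K s v A) (shiftL r q K v t B) ⟨(U, W), h⟩ =
        ∑ V0 : Fin U.length → Fin r,
          A ⟨(U ++ [s], List.ofFn V0 ++ [v]), by simp⟩ *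
            B ⟨(List.ofFn V0 ++ [v], W ++ [t]), by simp [h]⟩ := fun v => rfl
  simp only [key]
  rw [← Fintype.sum_prod_type']
  let e : Fin r × (Fin U.length → Fin r) ≃ (Fin (U ++ [s]).length → Fin r) :=
    (Fin.snocEquiv (fun _ => Fin r)).trans
      (Equiv.arrowCongr (finCongr hm).symm (Equiv.refl (Fin r)))
  refine (Fintype.sum_equiv e _ _ fun vV => ?_).symm
  obtain ⟨v, V0⟩ := vV
  have he : List.ofFn (e (v, V0)) = List.ofFn V0 ++ [v] := by
    have h1 : List.ofFn (e (v, V0)) = List.ofFn (Fin.snoc V0 v : Fin (U.length + 1) → Fin r) := by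
      rw [List.ofFn_congr hm]
      rfl
    rw [h1, List.ofFn_succ']
    simp [List.concat_eq_append]
  congr 1
  · exact congrArg A (Subtype.ext (Prod.ext rfl he.symm))
  · exact congrArg B (Subtype.ext (Prod.ext he.symm rfl))

end MatMulProof

set_option maxHeartbeats 1000000 in
set_option maxHeartbeats 1000000 in
set_option synthInstance.maxHeartbeats 400000 in
/-- The matrix product of two recurrence matrices is a recurrence matrix,
with complexity at most the product of the complexities. -/
theorem matMul_isRecMatrix {p r q : ℕ} {K : Type*} [Field K]
    (A : EqPair p r → K) (B : EqPair r q → K)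
    (hA : IsRecMatrix p r K A) (hB : IsRecMatrix r q K B) :
    IsRecMatrix p q K (matMul A B) ∧
      Module.finrank K (recClosure p q K (matMul A B)) ≤
        Module.finrank K (recClosure p r K A) *
          Module.finrank K (recClosure r q K B) := by
  classical
  haveI : FiniteDimensional K (recClosure p r K A) := hA
  haveI : FiniteDimensional K (recClosure r q K B) := hB
  set cA := recClosure p r K A with hcA
  set cB := recClosure r q K B with hcB
  set nA := Module.finrank K cA with hnA
  set nB := Module.finrank K cB with hnB
  let vA : Module.Basis (Fin nA) K cA := Module.finBasis K cA
  let vB : Module.Basis (Fin nB) K cB := Module.finBasis K cB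
  set gen : Fin nA × Fin nB → (EqPair p q → K) := fun ij =>
    matMul ((vA ij.1 : cA) : EqPair p r → K) ((vB ij.2 : cB) : EqPair r q → K) with hgen
  set W : Submodule K (EqPair p q → K) := Submodule.span K (Set.range gen) with hWdef
  -- every product of elements of the closures lies in W
  have hW : ∀ a ∈ cA, ∀ b ∈ cB, matMul a b ∈ W := by
    intro a ha b hb
    have ha' : a = ∑ i, vA.repr ⟨a, ha⟩ i • ((vA i : cA) : EqPair p r → K) := by
      conv_lhs => rw [show a = ((⟨a, ha⟩ : cA) : EqPair p r → K) from rfl,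
        ← vA.sum_repr ⟨a, ha⟩]
      rw [AddSubmonoidClass.coe_finset_sum]; rfl
    have hb' : b = ∑ j, vB.repr ⟨b, hb⟩ j • ((vB j : cB) : EqPair r q → K) := by
      conv_lhs => rw [show b = ((⟨b, hb⟩ : cB) : EqPair r q → K) from rfl,
        ← vB.sum_repr ⟨b, hb⟩]
      rw [AddSubmonoidClass.coe_finset_sum]; rfl
    obtain ⟨c, hc⟩ : ∃ c : Fin nA → K,
        a = ∑ i, c i • ((vA i : cA) : EqPair p r → K) := ⟨_, ha'⟩
    obtain ⟨d, hd⟩ : ∃ d : Fin nB → K,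
        b = ∑ j, d j • ((vB j : cB) : EqPair r q → K) := ⟨_, hb'⟩
    have key : matMul a b = ∑ j, ∑ i, (d j * c i) • gen (i, j) := by
      rw [show matMul a b = matMulL p r q K a b from rfl, hc, hd, map_sum]
      refine Finset.sum_congr rfl fun j _ => ?_
      rw [map_smul, map_sum, LinearMap.sum_apply, Finset.smul_sum]
      refine Finset.sum_congr rfl fun i _ => ?_
      rw [map_smul, LinearMap.smul_apply, smul_smul]
      rfl
    rw [key]
    exact Submodule.sum_mem _ fun j _ => Submodule.sum_mem _ fun i _ =>
      Submodule.smul_mem _ _ (Submodule.subset_span ⟨(i, j), rfl⟩)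
  have hmemAB : matMul A B ∈ W := hW A (mem_recClosure_self A) B (mem_recClosure_self B)
  have hclosed : RecClosed p q K W := by
    intro s t X hX
    induction hX using Submodule.span_induction with
    | mem x hx =>
        obtain ⟨⟨i, j⟩, rfl⟩ := hx
        rw [show gen (i, j) = matMul ((vA i : cA) : EqPair p r → K)
          ((vB j : cB) : EqPair r q → K) from rfl, shiftL_matMul]
        exact Submodule.sum_mem _ fun v _ =>
          hW _ (recClosed_recClosure A s v _ (vA i).2) _ (recClosed_recClosure B v t _ (vB j).2)
    | zero => rw [map_zero]; exact W.zero_mem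
    | add x y _ _ hx hy => rw [map_add]; exact W.add_mem hx hy
    | smul c x _ hx => rw [map_smul]; exact W.smul_mem c hx
  have hle : recClosure p q K (matMul A B) ≤ W := recClosure_le hmemAB hclosed
  haveI : FiniteDimensional K W := FiniteDimensional.span_of_finite K (Set.finite_range gen)
  refine ⟨Submodule.finiteDimensional_of_le hle, ?_⟩
  have h1 : Module.finrank K (recClosure p q K (matMul A B)) ≤ Module.finrank K W :=
    Submodule.finrank_mono hle
  have h2 : Module.finrank K W ≤ nA * nB := by
    have hr : Set.range gen = ↑(Finset.univ.image gen) := by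
      simp
    calc Module.finrank K W ≤ (Finset.univ.image gen).card := by
          rw [hWdef, hr]; exact finrank_span_finset_le_card _
      _ ≤ Finset.univ.card := Finset.card_image_le
      _ = nA * nB := by simp
  exact h1.trans h2
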